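/- Let n ∈ ℕ with n ≥ 1 and let I ⊊ 𝕋 = ℝ/2πℤ be an arc (interval) of the circle with arclength |I| > 1/n. Then there exists k ∈ ℤ² with max(|k₁|,|k₂|) = n such that the unit vector k/‖k‖₂ lies in I (viewing I as a set of unit vectors via the angle parametrization). -/

import Mathlib

open Real

private def Q (n : ℕ) (a b : ℝ) : Prop :=
  ∃ k : ℤ × ℤ, max |k.1| |k.2| = (n : ℤ) ∧
    ∃ θ ∈ Set.Icc a b,
      Real.cos θ = (k.1 : ℝ) / Real.sqrt ((k.1 : ℝ) ^ 2 + (k.2 : ℝ) ^ 2) ∧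
      Real.sin θ = (k.2 : ℝ) / Real.sqrt ((k.1 : ℝ) ^ 2 + (k.2 : ℝ) ^ 2)

private lemma arctan_lip (x y : ℝ) : |arctan x - arctan y| ≤ |x - y| := by
  have h : LipschitzWith 1 arctan := by
    apply lipschitzWith_of_nnnorm_deriv_le Real.differentiable_arctan
    intro x
    rw [Real.deriv_arctan]
    have h1 : (0:ℝ) < 1 + x ^ 2 := by positivity
    have : ‖(1:ℝ) / (1 + x ^ 2)‖ ≤ 1 := by
      rw [Real.norm_eq_abs, abs_of_pos (by positivity)]
      rw [div_le_one h1]; nlinarith [sq_nonneg x]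
    exact_mod_cast this
  have := h.dist_le_mul x y
  simpa [Real.dist_eq] using this

private lemma Q_base (n : ℕ) (hn : 1 ≤ n) (a b : ℝ) (ha : |a| ≤ π / 4)
    (hb : a + 1 / n ≤ b) : Q n a b := by
  have hn0 : (0:ℝ) < n := by exact_mod_cast hn
  have hpi4 : (0:ℝ) < π / 4 := by positivity
  have ha1 : -(π/2) < a := by
    have := abs_le.1 ha
    nlinarith [pi_pos]
  have ha2 : a < π/2 := by
    have := abs_le.1 ha
    nlinarith [pi_pos]
  have htan1 : tan a ≤ 1 := by
    rcases eq_or_lt_of_le ((abs_le.1 ha).2) with h | h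
    · rw [h, tan_pi_div_four]
    · have := Real.strictMonoOn_tan (Set.mem_Ioo.2 ⟨ha1, ha2⟩)
        (Set.mem_Ioo.2 ⟨by nlinarith [pi_pos], by nlinarith [pi_pos]⟩) h
      rw [tan_pi_div_four] at this; linarith
  have htan2 : -1 ≤ tan a := by
    rcases eq_or_lt_of_le ((abs_le.1 ha).1) with h | h
    · rw [← h, Real.tan_neg, Real.tan_pi_div_four]
    · have := Real.strictMonoOn_tan
        (Set.mem_Ioo.2 (⟨by nlinarith [pi_pos], by nlinarith [pi_pos]⟩ : _ ∧ _))
        (Set.mem_Ioo.2 ⟨ha1, ha2⟩) h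
      rw [show -(π/4) = -(π/4) from rfl, Real.tan_neg, tan_pi_div_four] at this
      linarith
  set j : ℤ := ⌈(n : ℝ) * tan a⌉ with hj
  have hjle : j ≤ (n : ℤ) := by
    apply Int.ceil_le.2
    push_cast
    nlinarith
  have hjge : -(n : ℤ) ≤ j := by
    have h1 : (-(n:ℝ)) ≤ ((j : ℤ) : ℝ) :=
      le_trans (by nlinarith) (Int.le_ceil ((n : ℝ) * tan a))
    exact_mod_cast h1
  set x : ℝ := (j : ℝ) / n with hx
  have hxge : tan a ≤ x := by
    rw [hx, le_div_iff₀ hn0, mul_comm]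
    exact Int.le_ceil _
  have hxlt : x ≤ tan a + 1 / n := by
    rw [hx, div_le_iff₀ hn0]
    have := Int.ceil_lt_add_one ((n : ℝ) * tan a)
    have h2 : (j : ℝ) < (n:ℝ) * tan a + 1 := by exact_mod_cast this
    have h3 : (tan a + 1 / (n:ℝ)) * n = (n:ℝ) * tan a + 1 := by
      field_simp
    linarith
  refine ⟨((n : ℤ), j), ?_, arctan x, ⟨?_, ?_⟩, ?_, ?_⟩
  · have h1 : |j| ≤ (n:ℤ) := abs_le.2 ⟨hjge, hjle⟩
    have h2 : |(n:ℤ)| = (n:ℤ) := abs_of_nonneg (by positivity)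
    rw [h2]
    exact max_eq_left h1
  · -- a ≤ arctan x
    have : a = arctan (tan a) := (Real.arctan_tan ha1 ha2).symm
    rw [this]
    exact Real.arctan_strictMono.monotone hxge
  · -- arctan x ≤ b
    have h1 : arctan x - arctan (tan a) ≤ |arctan x - arctan (tan a)| := le_abs_self _
    have h2 := arctan_lip x (tan a)
    have h3 : |x - tan a| = x - tan a := abs_of_nonneg (by linarith)
    have h4 : arctan (tan a) = a := Real.arctan_tan ha1 ha2
    rw [h3, h4] at h2
    rw [h4] at h1
    linarith
  all_goals {
    have key : ((n : ℝ)) ^ 2 + (j : ℝ) ^ 2 = (n:ℝ)^2 * (1 + x ^ 2) := by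
      rw [hx]; field_simp
    rw [show ((((n : ℤ) : ℝ)) ^ 2 : ℝ) = ((n:ℝ))^2 by push_cast; ring]
    first
      | rw [Real.cos_arctan]
      | rw [Real.sin_arctan]
    rw [key, Real.sqrt_mul (by positivity), Real.sqrt_sq hn0.le]
    have hs : Real.sqrt (1 + x ^ 2) > 0 := Real.sqrt_pos.2 (by positivity)
    push_cast
    rw [hx]
    field_simp
    try ring
  }

private lemma Q_shift_up (n : ℕ) (a b : ℝ) (h : Q n a b) : Q n (a + π/2) (b + π/2) := by
  obtain ⟨k, hk, θ, ⟨hθ1, hθ2⟩, hc, hs⟩ := h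
  refine ⟨(-k.2, k.1), ?_, θ + π/2, ⟨by linarith, by linarith⟩, ?_, ?_⟩
  · simpa [abs_neg, max_comm] using hk
  · rw [Real.cos_add_pi_div_two, hs]; push_cast; ring_nf
  · rw [Real.sin_add_pi_div_two, hc]; push_cast; ring_nf

private lemma Q_shift_down (n : ℕ) (a b : ℝ) (h : Q n a b) : Q n (a - π/2) (b - π/2) := by
  obtain ⟨k, hk, θ, ⟨hθ1, hθ2⟩, hc, hs⟩ := h
  refine ⟨(k.2, -k.1), ?_, θ - π/2, ⟨by linarith, by linarith⟩, ?_, ?_⟩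
  · simpa [abs_neg, max_comm] using hk
  · rw [Real.cos_sub_pi_div_two, hs]; push_cast; ring_nf
  · rw [Real.sin_sub_pi_div_two, hc]; push_cast; ring_nf

private lemma Q_shift (n : ℕ) (a b : ℝ) (h : Q n a b) (m : ℤ) :
    Q n (a + m * (π/2)) (b + m * (π/2)) := by
  induction m using Int.induction_on with
  | zero => simpa using h
  | succ i ih =>
      have h2 := Q_shift_up n _ _ ih
      push_cast at h2 ⊢
      have ea : a + (i:ℝ) * (π/2) + π/2 = a + ((i:ℝ) + 1) * (π/2) := by ring
      have eb : b + (i:ℝ) * (π/2) + π/2 = b + ((i:ℝ) + 1) * (π/2) := by ring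
      rw [ea, eb] at h2
      exact h2
  | pred i ih =>
      have h2 := Q_shift_down n _ _ ih
      push_cast at h2 ⊢
      have ea : a + -(i:ℝ) * (π/2) - π/2 = a + (-(i:ℝ) - 1) * (π/2) := by ring
      have eb : b + -(i:ℝ) * (π/2) - π/2 = b + (-(i:ℝ) - 1) * (π/2) := by ring
      rw [ea, eb] at h2
      exact h2

/-- any arc of the circle of length greater than `1/n` (and shorter than the
full circle) contains the direction `k/‖k‖₂` of an integer vector `k` with `|k|_max = n`. -/
theorem stmt_2 (n : ℕ) (hn : 1 ≤ n) (a b : ℝ) (hab : b - a > 1 / n) (hlt : b - a < 2 * π) :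
    ∃ k : ℤ × ℤ, max |k.1| |k.2| = (n : ℤ) ∧
      ∃ θ ∈ Set.Icc a b,
        Real.cos θ = (k.1 : ℝ) / Real.sqrt ((k.1 : ℝ) ^ 2 + (k.2 : ℝ) ^ 2) ∧
        Real.sin θ = (k.2 : ℝ) / Real.sqrt ((k.1 : ℝ) ^ 2 + (k.2 : ℝ) ^ 2) := by
  set m : ℤ := round (a / (π / 2)) with hm
  have hpi2 : (0:ℝ) < π / 2 := by positivity
  have habs : |a / (π/2) - m| ≤ 1/2 := abs_sub_round _
  have ha' : |a - m * (π/2)| ≤ π/4 := by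
    have e : a - m * (π/2) = (a / (π/2) - m) * (π/2) := by
      field_simp
    rw [e, abs_mul, abs_of_pos hpi2]
    calc |a / (π/2) - m| * (π/2) ≤ (1/2) * (π/2) :=
          mul_le_mul_of_nonneg_right habs hpi2.le
      _ = π/4 := by ring
  have hbase : Q n (a - m * (π/2)) (b - m * (π/2)) := by
    apply Q_base n hn _ _ ha'
    linarith
  have h2 := Q_shift n _ _ hbase m
  have ea : a - m * (π/2) + m * (π/2) = a := by ring
  have eb : b - m * (π/2) + m * (π/2) = b := by ring
  rw [ea, eb] at h2
  exact h2
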